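/- Let n ≥ 1, let μ be the Haar probability measure on SO(n), and let f(x) = ∫_{SO(n)} exp(tr(x·y)) dμ(y) be the Fisher integral on the space of n×n real matrices. Then for every pair of indices 1 ≤ i < j ≤ n and every n×n real matrix x: Σ_{k=1}^n ( x_{ki}·(∂f/∂x_{kj})(x) − x_{kj}·(∂f/∂x_{ki})(x) ) = 0, where ∂f/∂x_{ab} denotes the partial derivative of f in the (a,b) matrix-entry coordinate. -/

import Mathlib

open MeasureTheory Matrix
set_option synthInstance.maxHeartbeats 1000000
set_option maxHeartbeats 1000000

attribute [local instance] Matrix.normedAddCommGroup Matrix.normedSpace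

noncomputable instance matrixMeasurableSpace (n : ℕ) :
    MeasurableSpace (Matrix (Fin n) (Fin n) ℝ) := borel _

/-- The special orthogonal group `SO(n)`, viewed as a subset of the space of
`n × n` real matrices. -/
def SO (n : ℕ) : Set (Matrix (Fin n) (Fin n) ℝ) :=
  {y | yᵀ * y = 1 ∧ y.det = 1}

/-- `μ` is the Haar probability measure of `SO(n)`, viewed as a measure on the space of
`n × n` real matrices: it is a probability measure carried by `SO(n)` which is invariant
under left translation by elements of `SO(n)`. -/
structure IsHaarSO (n : ℕ) (μ : Measure (Matrix (Fin n) (Fin n) ℝ)) : Prop where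
  isProbabilityMeasure : IsProbabilityMeasure μ
  ae_mem : ∀ᵐ y ∂μ, y ∈ SO n
  left_invariant : ∀ a ∈ SO n, Measure.map (fun y => a * y) μ = μ

/-- The Fisher integral `f(x) = ∫_{SO(n)} exp(tr(x·y)) dμ(y)`, where
`tr(x·y) = Σᵢⱼ xᵢⱼ yᵢⱼ`. -/
noncomputable def fisher (n : ℕ) (μ : Measure (Matrix (Fin n) (Fin n) ℝ))
    (x : Matrix (Fin n) (Fin n) ℝ) : ℝ :=
  ∫ y, Real.exp (∑ i, ∑ j, x i j * y i j) ∂μ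

/-- The partial derivative operator `∂/∂x_{a b}` in the `(a,b)` matrix-entry coordinate. -/
noncomputable def pd {n : ℕ} (a b : Fin n) (g : Matrix (Fin n) (Fin n) ℝ → ℝ) :
    Matrix (Fin n) (Fin n) ℝ → ℝ :=
  fun x => fderiv ℝ g x (Matrix.single a b 1)

/-! ### Auxiliary material -/

instance (n : ℕ) : BorelSpace (Matrix (Fin n) (Fin n) ℝ) := ⟨rfl⟩

noncomputable instance (n : ℕ) : NormedAddCommGroup (Matrix (Fin n) (Fin n) ℝ →L[ℝ] ℝ) :=
  ContinuousLinearMap.toNormedAddCommGroup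

noncomputable instance (n : ℕ) : NormedSpace ℝ (Matrix (Fin n) (Fin n) ℝ →L[ℝ] ℝ) :=
  ContinuousLinearMap.toNormedSpace

instance (n : ℕ) : SecondCountableTopology (Matrix (Fin n) (Fin n) ℝ) :=
  inferInstanceAs (SecondCountableTopology (Fin n → Fin n → ℝ))

instance (n : ℕ) : TopologicalSpace.PseudoMetrizableSpace (Matrix (Fin n) (Fin n) ℝ →L[ℝ] ℝ) :=
  @PseudoEMetricSpace.pseudoMetrizableSpace _
    ContinuousLinearMap.toNormedAddCommGroup.toPseudoMetricSpace.toPseudoEMetricSpace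

section Aux

variable {n : ℕ}

lemma SO.mul_mem {a b : Matrix (Fin n) (Fin n) ℝ} (ha : a ∈ SO n) (hb : b ∈ SO n) :
    a * b ∈ SO n := by
  obtain ⟨ha1, ha2⟩ := ha; obtain ⟨hb1, hb2⟩ := hb
  constructor
  · rw [Matrix.transpose_mul]
    calc bᵀ * aᵀ * (a * b) = bᵀ * (aᵀ * a) * b := by noncomm_ring
      _ = 1 := by rw [ha1, mul_one, hb1]
  · rw [Matrix.det_mul, ha2, hb2, mul_one]

lemma SO.transpose_mem {a : Matrix (Fin n) (Fin n) ℝ} (ha : a ∈ SO n) : aᵀ ∈ SO n := by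
  obtain ⟨ha1, ha2⟩ := ha
  refine ⟨?_, by rwa [Matrix.det_transpose]⟩
  rw [Matrix.transpose_transpose]
  rw [mul_eq_one_comm] at ha1
  exact ha1

lemma SO.norm_le_one {y : Matrix (Fin n) (Fin n) ℝ} (hy : y ∈ SO n) : ‖y‖ ≤ 1 := by
  rcases n.eq_zero_or_pos with h | h
  · subst h
    simp [Matrix.norm_le_iff, Fin.forall_iff]
  refine (Matrix.norm_le_iff zero_le_one).2 fun i j => ?_
  have h1 : (yᵀ * y) j j = 1 := by rw [hy.1]; simp
  rw [Matrix.mul_apply] at h1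
  have h2 : (y i j) ^ 2 ≤ ∑ k, yᵀ j k * y k j := by
    rw [show ∑ k, yᵀ j k * y k j = ∑ k, (y k j)^2 by simp [Matrix.transpose_apply, sq]]
    exact Finset.single_le_sum (f := fun k => (y k j)^2) (fun k _ => sq_nonneg _)
      (Finset.mem_univ i)
  rw [h1] at h2
  rw [Real.norm_eq_abs]
  rw [← sq_abs] at h2
  nlinarith [abs_nonneg (y i j)]

lemma isClosed_SO : IsClosed (SO n) :=
  IsClosed.inter
    (isClosed_eq (Continuous.matrix_mul continuous_id.matrix_transpose continuous_id)
      continuous_const)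
    (isClosed_eq (Continuous.matrix_det continuous_id) continuous_const)

/-- Frobenius pairing. -/
def ip (x y : Matrix (Fin n) (Fin n) ℝ) : ℝ := ∑ i, ∑ j, x i j * y i j

lemma ip_mul_right (x a y : Matrix (Fin n) (Fin n) ℝ) : ip (x * a) y = ip x (y * aᵀ) := by
  unfold ip
  simp only [Matrix.mul_apply, Finset.sum_mul, Finset.mul_sum, Matrix.transpose_apply]
  refine Finset.sum_congr rfl fun i _ => ?_
  rw [Finset.sum_comm]
  exact Finset.sum_congr rfl fun k _ => Finset.sum_congr rfl fun j _ => by ring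

lemma abs_ip_le (x y : Matrix (Fin n) (Fin n) ℝ) : |ip x y| ≤ (n^2 : ℝ) * ‖x‖ * ‖y‖ := by
  calc |ip x y| ≤ ∑ i, ∑ j, |x i j * y i j| := by
        refine (Finset.abs_sum_le_sum_abs _ _).trans ?_
        exact Finset.sum_le_sum fun i _ => Finset.abs_sum_le_sum_abs _ _
    _ ≤ ∑ _i : Fin n, ∑ _j : Fin n, ‖x‖ * ‖y‖ := by
        refine Finset.sum_le_sum fun i _ => Finset.sum_le_sum fun j _ => ?_
        rw [abs_mul]
        have hx := Matrix.norm_entry_le_entrywise_sup_norm x (i := i) (j := j)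
        have hy := Matrix.norm_entry_le_entrywise_sup_norm y (i := i) (j := j)
        rw [Real.norm_eq_abs] at hx hy
        exact mul_le_mul hx hy (abs_nonneg _) (norm_nonneg _)
    _ = (n^2 : ℝ) * ‖x‖ * ‖y‖ := by simp [sq]; ring

/-- the pairing as a bilinear map -/
noncomputable def ipB : Matrix (Fin n) (Fin n) ℝ →ₗ[ℝ]
    Matrix (Fin n) (Fin n) ℝ →ₗ[ℝ] ℝ :=
  LinearMap.mk₂ ℝ ip
    (fun x x' y => by unfold ip; simp [Matrix.add_apply, add_mul, Finset.sum_add_distrib])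
    (fun c x y => by unfold ip; simp [Matrix.smul_apply, Finset.mul_sum, mul_assoc])
    (fun x y y' => by unfold ip; simp [Matrix.add_apply, mul_add, Finset.sum_add_distrib])
    (fun c x y => by
      unfold ip; simp only [Matrix.smul_apply, smul_eq_mul, Finset.mul_sum]
      exact Finset.sum_congr rfl fun i _ => Finset.sum_congr rfl fun j _ => by ring)

/-- `ip · y` as a continuous linear map. -/
noncomputable def ipCLM (y : Matrix (Fin n) (Fin n) ℝ) : Matrix (Fin n) (Fin n) ℝ →L[ℝ] ℝ :=
  LinearMap.toContinuousLinearMap (ipB.flip y)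

@[simp] lemma ipCLM_apply (y x : Matrix (Fin n) (Fin n) ℝ) : ipCLM y x = ip x y := rfl

lemma norm_ipCLM_le (y : Matrix (Fin n) (Fin n) ℝ) : ‖ipCLM y‖ ≤ (n^2 : ℝ) * ‖y‖ := by
  refine ContinuousLinearMap.opNorm_le_bound _ (by positivity) fun x => ?_
  change ‖ip x y‖ ≤ _
  rw [Real.norm_eq_abs]
  calc |ip x y| ≤ (n^2:ℝ) * ‖x‖ * ‖y‖ := abs_ip_le x y
    _ = (n^2:ℝ) * ‖y‖ * ‖x‖ := by ring

lemma continuous_ipCLM : Continuous (fun y : Matrix (Fin n) (Fin n) ℝ => ipCLM y) := by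
  have : (fun y : Matrix (Fin n) (Fin n) ℝ => ipCLM y) =
      (LinearMap.toContinuousLinearMap.toLinearMap.comp ipB.flip : _ →ₗ[ℝ] _) := rfl
  rw [this]
  exact LinearMap.continuous_of_finiteDimensional _

lemma continuous_ip (y : Matrix (Fin n) (Fin n) ℝ) : Continuous (fun x => ip x y) :=
  (ipCLM y).continuous

lemma continuous_ip' (x : Matrix (Fin n) (Fin n) ℝ) : Continuous (fun y => ip x y) :=
  LinearMap.continuous_of_finiteDimensional (ipB x)

variable {μ : Measure (Matrix (Fin n) (Fin n) ℝ)}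

/-- Left invariance of integrals. -/
lemma linv (hμ : IsHaarSO n μ) {a : Matrix (Fin n) (Fin n) ℝ} (ha : a ∈ SO n)
    (g : Matrix (Fin n) (Fin n) ℝ → ℝ) (hg : Continuous g) :
    ∫ y, g (a * y) ∂μ = ∫ y, g y ∂μ := by
  have hc : Continuous fun y : Matrix (Fin n) (Fin n) ℝ => a * y :=
    continuous_const.matrix_mul continuous_id
  conv_rhs => rw [← hμ.left_invariant a ha]
  exact (integral_map hc.aemeasurable hg.aestronglyMeasurable).symm

/-- The transposed-integral identity: `∫ g dμ = ∫ g(yᵀ) dμ(y)`. -/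
lemma Jeq (hμ : IsHaarSO n μ) (g : Matrix (Fin n) (Fin n) ℝ → ℝ) (hg : Continuous g)
    (C : ℝ) (hC : ∀ y ∈ SO n, |g y| ≤ C) :
    ∫ y, g y ∂μ = ∫ y, g yᵀ ∂μ := by
  haveI := hμ.isProbabilityMeasure
  -- right invariance of the transposed measure
  have claim2 : ∀ b ∈ SO n, ∫ y, g (yᵀ * b) ∂μ = ∫ y, g yᵀ ∂μ := by
    intro b hb
    have h := linv hμ (SO.transpose_mem hb) (fun y => g yᵀ)
      (hg.comp continuous_id.matrix_transpose)
    rw [← h]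
    refine integral_congr_ae (Filter.Eventually.of_forall fun y => ?_)
    simp [Matrix.transpose_mul]
  have hSO2' : ∀ᵐ p ∂(μ.prod μ), p ∈ SO n ×ˢ SO n := by
    rw [Measure.ae_prod_mem_iff_ae_ae_mem
      (isClosed_SO.measurableSet.prod isClosed_SO.measurableSet)]
    filter_upwards [hμ.ae_mem] with y hy
    filter_upwards [hμ.ae_mem] with z hz
    exact Set.mk_mem_prod hy hz
  have hSO2 : ∀ᵐ p ∂(μ.prod μ), p.1 ∈ SO n ∧ p.2 ∈ SO n :=
    hSO2'.mono fun p hp => Set.mem_prod.1 hp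
  have key : Integrable (fun p : Matrix (Fin n) (Fin n) ℝ × Matrix (Fin n) (Fin n) ℝ =>
      g (p.1ᵀ * p.2)) (μ.prod μ) := by
    refine Integrable.mono' (integrable_const C)
      ((hg.comp (Continuous.matrix_mul continuous_fst.matrix_transpose
        continuous_snd)).aestronglyMeasurable) ?_
    filter_upwards [hSO2] with p hp
    simpa [Real.norm_eq_abs] using hC _ (SO.mul_mem (SO.transpose_mem hp.1) hp.2)
  have swap := integral_integral_swap
    (f := fun y z : Matrix (Fin n) (Fin n) ℝ => g (yᵀ * z)) key
  have L : ∫ y, ∫ z, g (yᵀ * z) ∂μ ∂μ = ∫ y, g y ∂μ := by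
    rw [integral_congr_ae (g := fun _ => ∫ y, g y ∂μ)
      (by filter_upwards [hμ.ae_mem] with y hy
          exact linv hμ (SO.transpose_mem hy) g hg)]
    simp
  have R : ∫ z, ∫ y, g (yᵀ * z) ∂μ ∂μ = ∫ y, g yᵀ ∂μ := by
    rw [integral_congr_ae (g := fun _ => ∫ y, g yᵀ ∂μ)
      (by filter_upwards [hμ.ae_mem] with z hz
          exact claim2 z hz)]
    simp
  rw [← L, swap, R]

/-- Right invariance of integrals. -/
lemma rinv (hμ : IsHaarSO n μ) {b : Matrix (Fin n) (Fin n) ℝ} (hb : b ∈ SO n)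
    (g : Matrix (Fin n) (Fin n) ℝ → ℝ) (hg : Continuous g)
    (C : ℝ) (hC : ∀ y ∈ SO n, |g y| ≤ C) :
    ∫ y, g (y * b) ∂μ = ∫ y, g y ∂μ := by
  have claim2 : ∫ y, g (yᵀ * b) ∂μ = ∫ y, g yᵀ ∂μ := by
    have h := linv hμ (SO.transpose_mem hb) (fun y => g yᵀ)
      (hg.comp continuous_id.matrix_transpose)
    rw [← h]
    refine integral_congr_ae (Filter.Eventually.of_forall fun y => ?_)
    simp [Matrix.transpose_mul]
  have h1 : ∫ y, g (y * b) ∂μ = ∫ y, g (yᵀ * b) ∂μ := by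
    have := Jeq hμ (fun y => g (y * b))
      (hg.comp (continuous_id.matrix_mul continuous_const))
      C (fun y hy => hC _ (SO.mul_mem hy hb))
    simpa using this
  rw [h1, claim2, ← Jeq hμ g hg C hC]

lemma fisher_eq (x : Matrix (Fin n) (Fin n) ℝ) :
    fisher n μ x = ∫ y, Real.exp (ip x y) ∂μ := rfl

lemma exp_ip_bound (x : Matrix (Fin n) (Fin n) ℝ) {y : Matrix (Fin n) (Fin n) ℝ}
    (hy : y ∈ SO n) : |Real.exp (ip x y)| ≤ Real.exp ((n^2 : ℝ) * ‖x‖) := by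
  rw [abs_of_pos (Real.exp_pos _)]
  apply Real.exp_le_exp.2
  calc ip x y ≤ |ip x y| := le_abs_self _
    _ ≤ (n^2:ℝ) * ‖x‖ * ‖y‖ := abs_ip_le x y
    _ ≤ (n^2:ℝ) * ‖x‖ * 1 := by
        refine mul_le_mul_of_nonneg_left (SO.norm_le_one hy) (by positivity)
    _ = (n^2:ℝ) * ‖x‖ := mul_one _

/-- Right invariance of the Fisher integral. -/
lemma fisher_mul_right (hμ : IsHaarSO n μ) (x a : Matrix (Fin n) (Fin n) ℝ)
    (ha : a ∈ SO n) : fisher n μ (x * a) = fisher n μ x := by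
  rw [fisher_eq, fisher_eq]
  have h1 : ∀ y, ip (x * a) y = ip x (y * aᵀ) := fun y => ip_mul_right x a y
  calc ∫ y, Real.exp (ip (x * a) y) ∂μ = ∫ y, Real.exp (ip x (y * aᵀ)) ∂μ := by
        simp only [h1]
    _ = ∫ y, Real.exp (ip x y) ∂μ :=
        rinv hμ (SO.transpose_mem ha) (fun y => Real.exp (ip x y))
          ((continuous_ip' x).rexp) (Real.exp ((n^2 : ℝ) * ‖x‖))
          (fun y hy => exp_ip_bound x hy)

/-- Differentiability of the Fisher integral. -/
lemma fisher_hasFDerivAt (hμ : IsHaarSO n μ) (x₀ : Matrix (Fin n) (Fin n) ℝ) :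
    HasFDerivAt (fisher n μ) (∫ y, Real.exp (ip x₀ y) • ipCLM y ∂μ) x₀ := by
  haveI := hμ.isProbabilityMeasure
  have main := hasFDerivAt_integral_of_dominated_of_fderiv_le (𝕜 := ℝ) (μ := μ)
    (F := fun x y => Real.exp (ip x y))
    (F' := fun x y => Real.exp (ip x y) • ipCLM y)
    (x₀ := x₀)
    (bound := fun _ => Real.exp ((n^2:ℝ) * (‖x₀‖ + 1)) * ((n^2:ℝ) * 1))
    (s := Metric.ball x₀ 1) (Metric.ball_mem_nhds x₀ one_pos)
    (Filter.Eventually.of_forall fun x =>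
      ((continuous_ip' x).rexp).aestronglyMeasurable)
    (Integrable.mono' (integrable_const (Real.exp ((n^2 : ℝ) * ‖x₀‖)))
      ((continuous_ip' x₀).rexp).aestronglyMeasurable
      (by filter_upwards [hμ.ae_mem] with y hy
          simpa [Real.norm_eq_abs] using exp_ip_bound x₀ hy))
    (((continuous_ip' x₀).rexp.smul continuous_ipCLM).aestronglyMeasurable)
    (by filter_upwards [hμ.ae_mem] with y hy
        intro x hx
        erw [norm_smul (Real.exp (ip x y)) (ipCLM y), Real.norm_eq_abs]
        have h1 : |Real.exp (ip x y)| ≤ Real.exp ((n^2:ℝ) * (‖x₀‖ + 1)) := by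
          refine (exp_ip_bound x hy).trans (Real.exp_le_exp.2 ?_)
          have : ‖x‖ ≤ ‖x₀‖ + 1 := by
            have := mem_ball_iff_norm.1 hx
            calc ‖x‖ = ‖x₀ + (x - x₀)‖ := by congr 1; abel
              _ ≤ ‖x₀‖ + ‖x - x₀‖ := norm_add_le _ _
              _ ≤ ‖x₀‖ + 1 := by linarith
          exact mul_le_mul_of_nonneg_left this (by positivity)
        have h2 : ‖ipCLM y‖ ≤ (n^2:ℝ) * 1 := by
          refine (norm_ipCLM_le y).trans ?_
          exact mul_le_mul_of_nonneg_left (SO.norm_le_one hy) (by positivity)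
        exact mul_le_mul h1 h2 (norm_nonneg _) (Real.exp_pos _).le)
    (integrable_const _)
    (Filter.Eventually.of_forall fun y => fun x _ => by
      have := ((ipCLM y).hasFDerivAt (x := x)).exp
      simp only [ipCLM_apply] at this
      exact this)
  exact main

end Aux


attribute [local instance] Matrix.normedAddCommGroup Matrix.normedSpace

/-- Generator of the rotation in the `(i,j)` coordinate plane. -/
def rotE (n : ℕ) (i j : Fin n) : Matrix (Fin n) (Fin n) ℝ :=
  Matrix.single i j 1 - Matrix.single j i 1

/-- The rotation by angle `t` in the `(i,j)` coordinate plane. -/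
noncomputable def rotR (n : ℕ) (i j : Fin n) (t : ℝ) : Matrix (Fin n) (Fin n) ℝ :=
  1 + Real.sin t • rotE n i j + (1 - Real.cos t) • (rotE n i j * rotE n i j)

section RotAlg

variable {n : ℕ} {i j : Fin n}

lemma rotE_sq (hij : i ≠ j) :
    rotE n i j * rotE n i j = -(Matrix.single i i 1 + Matrix.single j j 1) := by
  unfold rotE
  simp [Matrix.sub_mul, Matrix.mul_sub, hij, hij.symm]
  abel

lemma rotE_cube (hij : i ≠ j) :
    rotE n i j * rotE n i j * rotE n i j = -rotE n i j := by
  rw [rotE_sq hij]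
  unfold rotE
  simp [Matrix.neg_mul, Matrix.add_mul, Matrix.mul_sub, hij, hij.symm]
  abel

lemma rotE_cube' (hij : i ≠ j) :
    rotE n i j * (rotE n i j * rotE n i j) = -rotE n i j := by
  rw [← mul_assoc]; exact rotE_cube hij

lemma rotE_four (hij : i ≠ j) :
    (rotE n i j * rotE n i j) * (rotE n i j * rotE n i j) = -(rotE n i j * rotE n i j) := by
  rw [← mul_assoc, mul_assoc (rotE n i j), rotE_cube' hij]
  simp [Matrix.mul_neg, Matrix.neg_mul]

lemma rot_mul (hij : i ≠ j) (p q r s : ℝ) :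
    (1 + p • rotE n i j + q • (rotE n i j * rotE n i j)) *
      (1 + r • rotE n i j + s • (rotE n i j * rotE n i j)) =
    1 + (p + r - p*s - q*r) • rotE n i j +
      (q + s + p*r - q*s) • (rotE n i j * rotE n i j) := by
  simp only [mul_add, add_mul, one_mul, mul_one, smul_mul_assoc, mul_smul_comm,
    rotE_cube hij, rotE_cube' hij, rotE_four hij, smul_smul, smul_neg]
  module

lemma rotE_transpose : (rotE n i j)ᵀ = -rotE n i j := by
  unfold rotE
  ext a b
  simp [Matrix.transpose_apply, Matrix.single, and_comm]

lemma rotR_transpose (t : ℝ) :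
    (rotR n i j t)ᵀ = 1 + (-Real.sin t) • rotE n i j +
      (1 - Real.cos t) • (rotE n i j * rotE n i j) := by
  unfold rotR
  rw [Matrix.transpose_add, Matrix.transpose_add, Matrix.transpose_one,
    Matrix.transpose_smul, Matrix.transpose_smul, Matrix.transpose_mul, rotE_transpose]
  simp [neg_smul, Matrix.neg_mul, Matrix.mul_neg]

lemma rotR_add (hij : i ≠ j) (a b : ℝ) : rotR n i j a * rotR n i j b = rotR n i j (a + b) := by
  unfold rotR
  rw [rot_mul hij]
  congr 1
  · congr 1
    rw [Real.sin_add]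
    ring
  · rw [Real.cos_add]
    ring

lemma rotR_mem (hij : i ≠ j) (t : ℝ) : rotR n i j t ∈ SO n := by
  have htr : (rotR n i j t)ᵀ * rotR n i j t = 1 := by
    rw [rotR_transpose]
    unfold rotR
    rw [rot_mul hij]
    have h1 : -Real.sin t + Real.sin t - -Real.sin t * (1 - Real.cos t) -
        (1 - Real.cos t) * Real.sin t = 0 := by ring
    have h2 : (1 - Real.cos t) + (1 - Real.cos t) + -Real.sin t * Real.sin t -
        (1 - Real.cos t) * (1 - Real.cos t) = 0 := by
      nlinarith [Real.sin_sq_add_cos_sq t]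
    rw [h1, h2, zero_smul, zero_smul, add_zero, add_zero]
  refine ⟨htr, ?_⟩
  have hsq : (rotR n i j t).det * (rotR n i j t).det = 1 := by
    have := congrArg Matrix.det htr
    rwa [Matrix.det_mul, Matrix.det_transpose, Matrix.det_one] at this
  have hpos : 0 ≤ (rotR n i j t).det := by
    have h : rotR n i j t = rotR n i j (t/2) * rotR n i j (t/2) := by
      rw [rotR_add hij]; norm_num
    rw [h, Matrix.det_mul]
    exact mul_self_nonneg _
  nlinarith

end RotAlg

theorem fisher_annihilated_by_rotational_operators (n : ℕ) (hn : 1 ≤ n)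
    (μ : Measure (Matrix (Fin n) (Fin n) ℝ)) (hμ : IsHaarSO n μ)
    (i j : Fin n) (hij : i < j) (x : Matrix (Fin n) (Fin n) ℝ) :
    ∑ k, (x k i * pd k j (fisher n μ) x - x k j * pd k i (fisher n μ) x) = 0 := by
  have hne : i ≠ j := ne_of_lt hij
  obtain ⟨D, hD⟩ : ∃ D, HasFDerivAt (fisher n μ) D x := ⟨_, fisher_hasFDerivAt hμ x⟩
  have hcurve : HasDerivAt (fun t => x * rotR n i j t) (x * rotE n i j) 0 := by
    have h1 : HasDerivAt (fun t => Real.sin t • (x * rotE n i j))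
        (Real.cos 0 • (x * rotE n i j)) 0 := (Real.hasDerivAt_sin 0).smul_const _
    have h2 : HasDerivAt (fun t => (1 - Real.cos t) • (x * (rotE n i j * rotE n i j)))
        ((0 - -Real.sin 0) • (x * (rotE n i j * rotE n i j))) 0 :=
      ((hasDerivAt_const (0:ℝ) (1:ℝ)).sub (Real.hasDerivAt_cos 0)).smul_const _
    have h3 := ((hasDerivAt_const (0:ℝ) x).add h1).add h2
    have he : (fun t => x + Real.sin t • (x * rotE n i j) +
        (1 - Real.cos t) • (x * (rotE n i j * rotE n i j))) =
        fun t => x * rotR n i j t := by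
      funext t
      unfold rotR
      rw [mul_add, mul_add, mul_one, Matrix.mul_smul, Matrix.mul_smul]
    rw [← he]
    have h4 : HasDerivAt (fun t => x + Real.sin t • (x * rotE n i j) +
        (1 - Real.cos t) • (x * (rotE n i j * rotE n i j)))
        (0 + Real.cos 0 • (x * rotE n i j) +
          (0 - -Real.sin 0) • (x * (rotE n i j * rotE n i j))) 0 := h3
    convert h4 using 1
    simp
  have hc0 : x * rotR n i j 0 = x := by unfold rotR; simp
  have hcomp : HasDerivAt (fun t => fisher n μ (x * rotR n i j t)) (D (x * rotE n i j)) 0 :=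
    by
      have hD' : HasFDerivAt (fisher n μ) D (x * rotR n i j 0) := by rw [hc0]; exact hD
      exact hD'.comp_hasDerivAt 0 hcurve
  have hconstf : (fun t => fisher n μ (x * rotR n i j t)) = fun _ => fisher n μ x :=
    funext fun t => fisher_mul_right hμ x _ (rotR_mem hne t)
  rw [hconstf] at hcomp
  have hzero : D (x * rotE n i j) = 0 := hcomp.unique (hasDerivAt_const 0 _)
  have hfd : fderiv ℝ (fisher n μ) x = D := hD.fderiv
  have hsum : (∑ k, (x k i • Matrix.single k j (1:ℝ) - x k j • Matrix.single k i 1)) =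
      x * rotE n i j := by
    ext a b
    simp only [Matrix.sum_apply, Matrix.sub_apply, Matrix.smul_apply, Matrix.single,
      rotE, Matrix.mul_apply, Matrix.of_apply, smul_eq_mul, mul_ite, mul_one, mul_zero,
      mul_sub, Finset.sum_sub_distrib]
    simp [ite_and, Finset.sum_ite_eq, Finset.sum_ite_eq']
  calc ∑ k, (x k i * pd k j (fisher n μ) x - x k j * pd k i (fisher n μ) x)
      = ∑ k, ((fderiv ℝ (fisher n μ) x)
          (x k i • Matrix.single k j 1 - x k j • Matrix.single k i 1)) := by
        refine Finset.sum_congr rfl fun k _ => ?_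
        rw [map_sub, _root_.map_smul, _root_.map_smul]
        simp [pd, smul_eq_mul]
    _ = (fderiv ℝ (fisher n μ) x)
          (∑ k, (x k i • Matrix.single k j 1 - x k j • Matrix.single k i 1)) :=
        (map_sum _ _ _).symm
    _ = D (x * rotE n i j) := by rw [hsum, hfd]
    _ = 0 := hzero
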